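/- Fix natural numbers m ≥ 2 and k ≥ 1. Let Π be a profile of k ballots over m candidates, let p be a candidate, and let Π' be a p-raise of Π. Then: (i) B(p,Π') > B(p,Π); (ii) B(q,Π') ≤ B(q,Π) for every candidate q ≠ p; (iii) t(p,Π') ≥ t(p,Π); and (iv) t(q,Π') ≤ t(q,Π) for every candidate q ≠ p. (Score-change lemma underlying the monotonicity of CHB.) -/

import Mathlib

open Finset

/-- A ballot over `m` candidates: a bijection assigning to each candidate its rank,
with rank `0` the most preferred. -/
abbrev Ballot (m : ℕ) := Fin m ≃ Fin m

/-- A profile of `k` ballots over `m` candidates. -/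
abbrev Profile (m k : ℕ) := Fin k → Ballot m

/-- The Borda score of candidate `p` in profile `A`: `∑ i, (m - 1 - rank_i(p))`. -/
def borda {m k : ℕ} (A : Profile m k) (p : Fin m) : ℕ :=
  ∑ i, (m - 1 - ((A i) p : ℕ))

/-- The first-place count of candidate `p` in profile `A`. -/
def firstCount {m k : ℕ} (A : Profile m k) (p : Fin m) : ℕ :=
  (Finset.univ.filter (fun i => ((A i) p : ℕ) = 0)).card

/-- `A'` is a `p`-raise of `A`: a single voter `i₀` strictly improves the rank of `p`
while preserving the relative order of all other candidates. -/
def IsPRaise {m k : ℕ} (p : Fin m) (A A' : Profile m k) : Prop :=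
  ∃ i₀ : Fin k,
    (∀ i, i ≠ i₀ → A' i = A i) ∧
    ((A' i₀) p : ℕ) < ((A i₀) p : ℕ) ∧
    ∀ q q' : Fin m, q ≠ p → q' ≠ p →
      (((A' i₀) q : ℕ) < ((A' i₀) q' : ℕ) ↔ ((A i₀) q : ℕ) < ((A i₀) q' : ℕ))

lemma rank_eq_card {m : ℕ} (e : Fin m ≃ Fin m) (q : Fin m) :
    (Finset.univ.filter fun c => ((e c : ℕ)) < (e q : ℕ)).card = (e q : ℕ) := by
  have h : (Finset.univ.filter fun c => ((e c : ℕ)) < (e q : ℕ)).card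
      = (Finset.Iio (e q)).card := by
    apply Finset.card_nbij' (fun c => e c) (fun x => e.symm x)
    · intro a ha
      simp only [coe_filter, Set.mem_setOf_eq, mem_filter, mem_univ, true_and] at ha
      exact Finset.mem_Iio.mpr (Fin.lt_def.mpr ha)
    · intro x hx
      have := Fin.lt_def.mp (Finset.mem_Iio.mp hx)
      simp only [coe_filter, Set.mem_setOf_eq, mem_filter, mem_univ, true_and, Equiv.apply_symm_apply]
      exact this
    · intro a _; simp
    · intro x _; simp
  rw [h, Fin.card_Iio]

lemma rank_le_of_raise {m : ℕ} (e e' : Fin m ≃ Fin m) (p : Fin m)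
    (hp : ((e' p : ℕ)) < (e p : ℕ))
    (h : ∀ q q' : Fin m, q ≠ p → q' ≠ p →
      (((e' q : ℕ)) < ((e' q' : ℕ)) ↔ ((e q : ℕ)) < ((e q' : ℕ))))
    (q : Fin m) (hq : q ≠ p) : (e q : ℕ) ≤ (e' q : ℕ) := by
  have huniv : (Finset.univ : Finset (Fin m)) = insert p (Finset.univ.erase p) :=
    (Finset.insert_erase (mem_univ p)).symm
  have key : ∀ f : Fin m ≃ Fin m,
      (Finset.univ.filter fun c => ((f c : ℕ)) < (f q : ℕ)).card =
      ((Finset.univ.erase p).filter fun c => ((f c : ℕ)) < (f q : ℕ)).card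
        + (if ((f p : ℕ)) < (f q : ℕ) then 1 else 0) := by
    intro f
    nth_rewrite 1 [huniv]
    rw [Finset.filter_insert]
    split
    · rw [Finset.card_insert_of_notMem (by simp)]
    · omega
  have heq : ((Finset.univ.erase p).filter fun c => ((e' c : ℕ)) < (e' q : ℕ)) =
      ((Finset.univ.erase p).filter fun c => ((e c : ℕ)) < (e q : ℕ)) := by
    apply Finset.filter_congr
    intro c hc
    have hcp : c ≠ p := Finset.ne_of_mem_erase hc
    simpa using h c q hcp hq
  have h1 := rank_eq_card e q
  have h2 := rank_eq_card e' q
  rw [key e] at h1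
  rw [key e', heq] at h2
  have hne : (e' p : ℕ) ≠ (e' q : ℕ) := fun habs =>
    hq.symm (e'.injective (Fin.ext habs))
  split at h1 <;> split at h2 <;> omega

/-- **Score-change lemma underlying the monotonicity of CHB.** For any `p`-raise `A'`
of a profile `A` of `k ≥ 1` ballots over `m ≥ 2` candidates:
(i) the Borda score of `p` strictly increases; (ii) the Borda score of every other
candidate does not increase; (iii) the first-place count of `p` does not decrease;
(iv) the first-place count of every other candidate does not increase. -/
theorem score_change_of_pRaise {m k : ℕ} (hm : 2 ≤ m) (hk : 1 ≤ k)
    (A A' : Profile m k) (p : Fin m) (hraise : IsPRaise p A A') :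
    borda A p < borda A' p ∧
    (∀ q : Fin m, q ≠ p → borda A' q ≤ borda A q) ∧
    firstCount A p ≤ firstCount A' p ∧
    (∀ q : Fin m, q ≠ p → firstCount A' q ≤ firstCount A q) := by
  obtain ⟨i₀, hoff, hp, hord⟩ := hraise
  have hle : ∀ q : Fin m, q ≠ p → ((A i₀) q : ℕ) ≤ ((A' i₀) q : ℕ) := by
    intro q hq
    exact rank_le_of_raise (A i₀) (A' i₀) p hp hord q hq
  refine ⟨?_, ?_, ?_, ?_⟩
  · apply Finset.sum_lt_sum ?_ ⟨i₀, mem_univ i₀, ?_⟩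
    · intro i _
      rcases eq_or_ne i i₀ with rfl | hi
      · have := ((A i) p).isLt; omega
      · rw [hoff i hi]
    · have := ((A i₀) p).isLt; omega
  · intro q hq
    apply Finset.sum_le_sum
    intro i _
    rcases eq_or_ne i i₀ with rfl | hi
    · have := hle q hq; omega
    · rw [hoff i hi]
  · apply Finset.card_le_card
    intro i hi
    simp only [mem_filter, mem_univ, true_and] at hi ⊢
    rcases eq_or_ne i i₀ with rfl | h
    · omega
    · rw [hoff i h]; exact hi
  · intro q hq
    apply Finset.card_le_card
    intro i hi
    simp only [mem_filter, mem_univ, true_and] at hi ⊢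
    rcases eq_or_ne i i₀ with rfl | h
    · have := hle q hq; omega
    · rw [← hoff i h]; exact hi
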